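/- Let A be an n×m real matrix, b ∈ ℝ^n, p ∈ [1,∞), Z = min_{x∈ℝ^m} ‖Ax − b‖_p, and suppose A = Uτ where U is an (α,β,p)-well-conditioned basis for the column space of A. Let 0 < ε ≤ 1/7 and r_2 > 0. Let x̂_c ∈ ℝ^m satisfy ‖Ax̂_c − b‖_p ≤ 8Z, set ρ̂ = Ax̂_c − b with ρ̂ ≠ 0, and let q_1,…,q_n ∈ (0,1] satisfy, for every i with q_i < 1: q_i ≥ r_2·|ρ̂_i|^p / ‖ρ̂‖_p^p and q_i ≥ r_2·‖U_{(i)}‖_p^p / |||U|||_p^p. Let T be a random n×n diagonal sampling matrix with probabilities q_i. Fix x_ε ∈ ℝ^m with ‖Ax_ε − Ax̂_c‖_p ≤ 12Z and ‖Ax_ε − b‖_p > (1+6ε)Z. Then the probability that ‖T(Ax_ε − b)‖_p ≤ (1+3ε)Z is at most exp(−ε²r_2 / (24^p (αβ)^p)). -/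

import Mathlib

open scoped BigOperators

/-- The entrywise `p`-norm of a vector: `(∑ i, |v i| ^ p) ^ (1/p)`. -/
noncomputable def pnorm (p : ℝ) {n : ℕ} (v : Fin n → ℝ) : ℝ :=
  (∑ i, |v i| ^ p) ^ (1 / p)

/-- The dual norm of the `p`-norm: the max-norm if `p = 1`, else the `p/(p-1)`-norm. -/
noncomputable def qnorm (p : ℝ) {n : ℕ} (v : Fin n → ℝ) : ℝ :=
  if p = 1 then ⨆ i, |v i| else pnorm (p / (p - 1)) v

/-- The entrywise `p`-norm of a matrix. -/
noncomputable def mpnorm (p : ℝ) {n d : ℕ} (M : Matrix (Fin n) (Fin d) ℝ) : ℝ :=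
  (∑ i, ∑ j, |M i j| ^ p) ^ (1 / p)

/-- `U` is an `(α, β, p)`-well-conditioned basis for the column space of `A`. -/
def IsWCB (p α β : ℝ) {n m d : ℕ} (A : Matrix (Fin n) (Fin m) ℝ)
    (U : Matrix (Fin n) (Fin d) ℝ) : Prop :=
  LinearMap.range U.mulVecLin = LinearMap.range A.mulVecLin ∧
  mpnorm p U ≤ α ∧
  ∀ z : Fin d → ℝ, qnorm p z ≤ β * pnorm p (U.mulVec z)

/-- `S : Ω → Matrix` is a random `n × n` diagonal sampling matrix with probabilities `pr`:
its diagonal entries are mutually independent, with `S ω i i = (pr i) ^ (-1/p)` with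
probability `pr i` and `S ω i i = 0` with probability `1 - pr i`. -/
structure IsSamplingMatrix {Ω : Type} [MeasurableSpace Ω] (μ : MeasureTheory.Measure Ω)
    (p : ℝ) {n : ℕ} (pr : Fin n → ℝ) (S : Ω → Matrix (Fin n) (Fin n) ℝ) : Prop where
  offdiag : ∀ ω i j, i ≠ j → S ω i j = 0
  meas : ∀ i, Measurable fun ω => S ω i i
  prob_val : ∀ i, μ {ω | S ω i i = (pr i) ^ (-(1 / p))} = ENNReal.ofReal (pr i)
  prob_zero : ∀ i, μ {ω | S ω i i = 0} = ENNReal.ofReal (1 - pr i)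
  indep : ProbabilityTheory.iIndepFun (fun i ω => S ω i i) μ

section Aux

open MeasureTheory ProbabilityTheory Real

lemma sum_abs_rpow_nonneg (p : ℝ) {k : ℕ} (v : Fin k → ℝ) : 0 ≤ ∑ i, |v i| ^ p :=
  Finset.sum_nonneg fun i _ => Real.rpow_nonneg (abs_nonneg _) p

lemma pnorm_nonneg (p : ℝ) {k : ℕ} (v : Fin k → ℝ) : 0 ≤ pnorm p v :=
  Real.rpow_nonneg (sum_abs_rpow_nonneg p v) _

lemma pnorm_rpow {p : ℝ} (hp : 1 ≤ p) {k : ℕ} (v : Fin k → ℝ) :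
    pnorm p v ^ p = ∑ i, |v i| ^ p := by
  have hp0 : p ≠ 0 := by linarith
  rw [pnorm, ← Real.rpow_mul (sum_abs_rpow_nonneg p v), one_div, inv_mul_cancel₀ hp0,
    Real.rpow_one]

lemma pnorm_pos {p : ℝ} (hp : 1 ≤ p) {k : ℕ} {v : Fin k → ℝ} (hv : v ≠ 0) :
    0 < pnorm p v := by
  obtain ⟨i, hi⟩ := Function.ne_iff.mp hv
  have h1 : (0:ℝ) < |v i| ^ p :=
    Real.rpow_pos_of_pos (abs_pos.mpr hi) p
  have h2 : (0:ℝ) < ∑ j, |v j| ^ p :=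
    lt_of_lt_of_le h1 (Finset.single_le_sum
      (fun j _ => Real.rpow_nonneg (abs_nonneg _) p) (Finset.mem_univ i))
  exact Real.rpow_pos_of_pos h2 _

/-- Hölder's inequality for a row. -/
lemma holder_row {p : ℝ} (hp : 1 ≤ p) {k : ℕ} (a z : Fin k → ℝ) :
    |∑ j, a j * z j| ≤ pnorm p a * qnorm p z := by
  have habs : |∑ j, a j * z j| ≤ ∑ j, |a j| * |z j| := by
    refine le_trans (Finset.abs_sum_le_sum_abs _ _) ?_
    refine le_of_eq (Finset.sum_congr rfl fun j _ => abs_mul _ _)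
  rcases eq_or_lt_of_le hp with h1 | h1
  · -- p = 1
    rw [qnorm, if_pos h1.symm]
    have hC : ∀ j, |z j| ≤ ⨆ i, |z i| := fun j =>
      le_ciSup (f := fun i => |z i|) (Set.Finite.bddAbove (Set.finite_range _)) j
    rcases Nat.eq_zero_or_pos k with hk | hk
    · subst hk
      have : (0:ℝ) ^ (1/p) = 0 := by
        rw [Real.zero_rpow]; positivity
      simp [pnorm, Real.iSup_of_isEmpty, this]
    · have hk' : Nonempty (Fin k) := ⟨⟨0, hk⟩⟩
      have hC0 : 0 ≤ ⨆ i, |z i| :=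
        le_trans (abs_nonneg _) (hC (Classical.arbitrary _))
      have : ∑ j, |a j| * |z j| ≤ ∑ j, |a j| * (⨆ i, |z i|) :=
        Finset.sum_le_sum fun j _ => mul_le_mul_of_nonneg_left (hC j) (abs_nonneg _)
      have h2 : pnorm p a = ∑ j, |a j| := by
        rw [pnorm, ← h1]
        simp [Real.rpow_one]
      rw [h2, Finset.sum_mul]
      exact le_trans habs (le_trans this (le_of_eq rfl))
  · -- 1 < p
    have hpq : p.HolderConjugate (p / (p-1)) := Real.HolderConjugate.conjExponent h1
    have hq1 : p ≠ 1 := ne_of_gt h1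
    rw [qnorm, if_neg hq1]
    have := Real.inner_le_Lp_mul_Lq (Finset.univ) (fun j => |a j|) (fun j => |z j|) hpq
    simp only [abs_abs] at this
    rw [pnorm, pnorm]
    exact le_trans habs this

/-- Expectation of a function of a two-point random variable. -/
lemma integral_two_point {Ω : Type} [MeasurableSpace Ω] (μ : MeasureTheory.Measure Ω)
    [MeasureTheory.IsProbabilityMeasure μ] (X : Ω → ℝ) (hX : Measurable X)
    (a qv : ℝ) (ha : a ≠ 0) (hq0 : 0 ≤ qv) (hq1 : qv ≤ 1)
    (hA : μ {ω | X ω = a} = ENNReal.ofReal qv)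
    (hB : μ {ω | X ω = 0} = ENNReal.ofReal (1 - qv)) (f : ℝ → ℝ) :
    ∫ ω, f (X ω) ∂μ = qv * f a + (1 - qv) * f 0 := by
  set S1 : Set Ω := {ω | X ω = a} with hS1
  set S2 : Set Ω := {ω | X ω = 0} with hS2
  have hS1m : MeasurableSet S1 := hX (measurableSet_singleton a)
  have hS2m : MeasurableSet S2 := hX (measurableSet_singleton 0)
  have hdisj : Disjoint S1 S2 := by
    rw [Set.disjoint_left]
    intro ω h1 h2
    exact ha (h1.symm.trans h2)
  have hunion : μ (S1 ∪ S2) = 1 := by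
    rw [measure_union hdisj hS2m, hA, hB, ← ENNReal.ofReal_add hq0 (by linarith)]
    norm_num
  have hcompl : μ (S1 ∪ S2)ᶜ = 0 := by
    have := measure_compl (hS1m.union hS2m) (MeasureTheory.measure_ne_top μ _)
    rw [hunion, measure_univ] at this
    simpa using this
  have hae : (fun ω => f (X ω)) =ᵐ[μ]
      (fun ω => S1.indicator (fun _ => f a) ω + S2.indicator (fun _ => f 0) ω) := by
    apply Filter.eventuallyEq_of_mem (MeasureTheory.mem_ae_iff.mpr hcompl)
    intro ω hω
    rcases hω with h1 | h2
    · have h2 : ω ∉ S2 := Set.disjoint_left.mp hdisj h1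
      have hx : X ω = a := h1
      simp [Set.indicator_of_mem h1, Set.indicator_of_notMem h2, hx]
    · have h1 : ω ∉ S1 := (Set.disjoint_right.mp hdisj) h2
      have hx : X ω = 0 := h2
      simp [Set.indicator_of_mem h2, Set.indicator_of_notMem h1, hx]
  rw [MeasureTheory.integral_congr_ae hae, MeasureTheory.integral_add
      ((MeasureTheory.integrable_const (f a)).indicator hS1m)
      ((MeasureTheory.integrable_const (f 0)).indicator hS2m),
    MeasureTheory.integral_indicator_const _ hS1m, MeasureTheory.integral_indicator_const _ hS2m,
    MeasureTheory.measureReal_def, MeasureTheory.measureReal_def, hA, hB, ENNReal.toReal_ofReal hq0, ENNReal.toReal_ofReal (by linarith)]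
  simp [smul_eq_mul]

/-- Chord bound for the convex exponential. -/
lemma exp_chord {lam M w : ℝ} (hM : 0 < M) (hw0 : 0 ≤ w) (hwM : w ≤ M) (hlam : 0 ≤ lam) :
    Real.exp (-(lam * w)) ≤ 1 - (w / M) * (1 - Real.exp (-(lam * M))) := by
  have hθ0 : 0 ≤ w / M := div_nonneg hw0 hM.le
  have hθ1 : w / M ≤ 1 := (div_le_one hM).mpr hwM
  have h := convexOn_exp.2 (Set.mem_univ (0:ℝ)) (Set.mem_univ (-(lam * M)))
    (by linarith : (0:ℝ) ≤ 1 - w / M) hθ0 (by ring)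
  simp only [smul_eq_mul, mul_zero, zero_add, Real.exp_zero] at h
  have harg : (w / M) * -(lam * M) = -(lam * w) := by field_simp
  rw [harg] at h
  calc Real.exp (-(lam * w)) ≤ (1 - w/M) * 1 + (w/M) * Real.exp (-(lam * M)) := h
    _ = 1 - (w / M) * (1 - Real.exp (-(lam * M))) := by ring

/-- The core scalar inequality. -/
lemma core_ineq {p ε : ℝ} (hp : 1 ≤ p) (hε : 0 < ε) (hε' : ε ≤ 1/7) :
    3*ε/(1+6*ε) * (1+3*ε)^p + ε^2 ≤ (1 - Real.exp (-(3*ε/(1+6*ε)))) * (1+6*ε)^p := by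
  have hD : (0:ℝ) < 1+6*ε := by linarith
  set s : ℝ := 3*ε/(1+6*ε) with hs_def
  have hs0 : 0 < s := by positivity
  have hs37 : s ≤ 3/7 := by
    have h1 : s ≤ 3*ε := div_le_self (by positivity) (by linarith)
    linarith
  have hs1 : s ≤ 1 := by linarith
  -- Taylor bound for exp(-s)
  have hexp : Real.exp (-s) ≤ 1 - s + s^2/2 + (2/9)*s^3 := by
    have h := Real.exp_bound (x := -s) (by rw [abs_neg, abs_of_nonneg hs0.le]; exact hs1)
      (n := 3) (by norm_num)
    rw [abs_neg, abs_of_nonneg hs0.le] at h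
    simp [Finset.sum_range_succ, Nat.factorial] at h
    rw [abs_le] at h
    nlinarith [h.2]
  have hB1 : (1:ℝ) ≤ (1+6*ε)^p := by
    calc (1:ℝ) = (1:ℝ) ^ p := (Real.one_rpow p).symm
    _ ≤ (1+6*ε) ^ p := Real.rpow_le_rpow zero_le_one (by linarith) (by linarith)
  have hB0 : (0:ℝ) ≤ (1+6*ε)^p := by linarith
  have hr_eq : (1+3*ε)/(1+6*ε) = 1 - s := by
    rw [hs_def]
    field_simp
    ring
  have hr0 : (0:ℝ) < (1+3*ε)/(1+6*ε) := by positivity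
  have hr1 : (1+3*ε)/(1+6*ε) ≤ 1 := by rw [div_le_one hD]; linarith
  have hA1 : (1+3*ε)^p ≤ (1 - s) * (1+6*ε)^p := by
    have h1 : ((1+3*ε)/(1+6*ε))^p ≤ (1 - s) := by
      calc ((1+3*ε)/(1+6*ε))^p ≤ ((1+3*ε)/(1+6*ε))^(1:ℝ) :=
            Real.rpow_le_rpow_of_exponent_ge hr0 hr1 hp
      _ = (1+3*ε)/(1+6*ε) := Real.rpow_one _
      _ = 1 - s := hr_eq
    have h2 : (1+3*ε)^p = ((1+3*ε)/(1+6*ε))^p * (1+6*ε)^p := by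
      rw [Real.div_rpow (by linarith) hD.le]
      field_simp
    rw [h2]
    exact mul_le_mul_of_nonneg_right h1 hB0
  -- 1 - exp(-s) ≥ s - s²/2 - (2/9)s³
  have hlow : s - s^2/2 - (2/9)*s^3 ≤ 1 - Real.exp (-s) := by linarith
  -- s ≥ 21 ε / 13
  have hsl : 21*ε/13 ≤ s := by
    rw [hs_def, div_le_div_iff₀ (by norm_num) hD]
    nlinarith
  -- bracket bound
  have hbr : ε^2 ≤ s^2/2 - (2/9)*s^3 := by nlinarith
  have hbr0 : (0:ℝ) ≤ s^2/2 - (2/9)*s^3 := by nlinarith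
  calc s * (1+3*ε)^p + ε^2
      ≤ s * ((1-s) * (1+6*ε)^p) + (s^2/2 - (2/9)*s^3) := by
        have := mul_le_mul_of_nonneg_left hA1 hs0.le
        linarith
    _ ≤ s * ((1-s) * (1+6*ε)^p) + (s^2/2 - (2/9)*s^3) * (1+6*ε)^p := by
        nlinarith
    _ = (s*(1-s) + s^2/2 - (2/9)*s^3) * (1+6*ε)^p := by ring
    _ ≤ (1 - Real.exp (-s)) * (1+6*ε)^p := by
        apply mul_le_mul_of_nonneg_right _ hB0
        nlinarith

lemma qnorm_nonneg (p : ℝ) {k : ℕ} (v : Fin k → ℝ) : 0 ≤ qnorm p v := by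
  rw [qnorm]
  split
  · rcases isEmpty_or_nonempty (Fin k) with h | h
    · simp [Real.iSup_of_isEmpty]
    · exact le_trans (abs_nonneg _) (le_ciSup (f := fun i => |v i|)
        (Set.Finite.bddAbove (Set.finite_range _)) (Classical.arbitrary _))
  · exact pnorm_nonneg _ _

lemma le_of_rpow_le_rpow {p x y : ℝ} (hp : 1 ≤ p) (hx : 0 ≤ x) (hy : 0 ≤ y)
    (h : x ^ p ≤ y ^ p) : x ≤ y := by
  by_contra hlt
  push_neg at hlt
  have := Real.rpow_lt_rpow hy hlt (by linarith : (0:ℝ) < p)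
  linarith

end Aux

set_option maxHeartbeats 1000000 in
/-- **Lemma 5, single-point version: concentration at one ε-net point.**
Fix `x_ε` with `‖A x_ε - A x̂_c‖_p ≤ 12 Z` and `‖A x_ε - b‖_p > (1 + 6ε) Z`.  Then the
probability that `‖T (A x_ε - b)‖_p ≤ (1 + 3ε) Z` is at most
`exp(-ε² r₂ / (24^p (αβ)^p))`. -/
theorem eps_net_point_concentration {Ω : Type} [MeasurableSpace Ω]
    (μ : MeasureTheory.Measure Ω) [MeasureTheory.IsProbabilityMeasure μ]
    {n m d : ℕ} (A : Matrix (Fin n) (Fin m) ℝ) (b : Fin n → ℝ)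
    (U : Matrix (Fin n) (Fin d) ℝ) (τ : Matrix (Fin d) (Fin m) ℝ)
    (p α β ε r₂ Z : ℝ) (xc xε : Fin m → ℝ)
    (qpr : Fin n → ℝ) (T : Ω → Matrix (Fin n) (Fin n) ℝ)
    (hp : 1 ≤ p) (hA : A = U * τ) (hU : IsWCB p α β A U)
    (hε : 0 < ε) (hε' : ε ≤ 1 / 7) (hr₂ : 0 < r₂)
    (hZ : IsLeast {t : ℝ | ∃ x : Fin m → ℝ, t = pnorm p (A.mulVec x - b)} Z)
    (hxc : pnorm p (A.mulVec xc - b) ≤ 8 * Z)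
    (hρ : A.mulVec xc - b ≠ 0)
    (hq : ∀ i, 0 < qpr i ∧ qpr i ≤ 1)
    (hq1 : ∀ i, qpr i < 1 →
      r₂ * |(A.mulVec xc - b) i| ^ p / pnorm p (A.mulVec xc - b) ^ p ≤ qpr i)
    (hq2 : ∀ i, qpr i < 1 → r₂ * pnorm p (U i) ^ p / mpnorm p U ^ p ≤ qpr i)
    (hT : IsSamplingMatrix μ p qpr T)
    (hball : pnorm p (A.mulVec xε - A.mulVec xc) ≤ 12 * Z)
    (hfar : (1 + 6 * ε) * Z < pnorm p (A.mulVec xε - b)) :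
    μ {ω | pnorm p ((T ω).mulVec (A.mulVec xε - b)) ≤ (1 + 3 * ε) * Z} ≤
      ENNReal.ofReal (Real.exp (-(ε ^ 2 * r₂) / (24 ^ p * (α * β) ^ p))) := by
  classical
  obtain ⟨hrange, hUα, hUβ⟩ := hU
  set ρ : Fin n → ℝ := A.mulVec xε - b with hρ_def
  set ρh : Fin n → ℝ := A.mulVec xc - b with hρh_def
  clear_value ρ ρh
  have hp0 : (0:ℝ) < p := by linarith
  have hρh_pos : 0 < pnorm p ρh := pnorm_pos hp hρ
  have hZ0 : 0 ≤ Z := by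
    obtain ⟨x, hx⟩ := hZ.1
    rw [hx]; exact pnorm_nonneg _ _
  have hZpos : 0 < Z := by linarith
  have hZp_pos : (0:ℝ) < Z ^ p := Real.rpow_pos_of_pos hZpos _
  -- the case U = 0 is absurd
  by_cases hU0 : U = 0
  · exfalso
    have hA0 : A = 0 := by rw [hA, hU0, Matrix.zero_mul]
    obtain ⟨x₀, hx₀⟩ := hZ.1
    have h1 : Z = pnorm p ρ := by
      rw [hx₀, hρ_def, hA0]
      simp [Matrix.zero_mulVec]
    nlinarith [hfar]
  -- some nonzero entry of U
  have hij : ∃ i j, U i j ≠ 0 := by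
    by_contra h
    push_neg at h
    exact hU0 (Matrix.ext fun i j => by simpa using h i j)
  obtain ⟨i₀, j₀, hj₀⟩ := hij
  have hmp_pos : 0 < mpnorm p U := by
    have h1 : (0:ℝ) < |U i₀ j₀| ^ p := Real.rpow_pos_of_pos (abs_pos.mpr hj₀) p
    have h2 : (0:ℝ) < ∑ i, ∑ j, |U i j| ^ p := by
      refine lt_of_lt_of_le h1 ?_
      refine le_trans (Finset.single_le_sum (f := fun j => |U i₀ j| ^ p)
        (fun j _ => Real.rpow_nonneg (abs_nonneg _) _) (Finset.mem_univ j₀)) ?_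
      exact Finset.single_le_sum (f := fun i => ∑ j, |U i j| ^ p)
        (fun i _ => Finset.sum_nonneg fun j _ => Real.rpow_nonneg (abs_nonneg _) _)
        (Finset.mem_univ i₀)
    exact Real.rpow_pos_of_pos h2 _
  have hα_pos : 0 < α := lt_of_lt_of_le hmp_pos hUα
  -- the column of U through j₀, used to show 1 ≤ αβ
  have hcol_le : pnorm p (U.mulVec (Pi.single j₀ (1:ℝ))) ≤ mpnorm p U := by
    rw [Matrix.mulVec_single, pnorm, mpnorm]
    apply Real.rpow_le_rpow (sum_abs_rpow_nonneg _ _) _ (by positivity)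
    refine Finset.sum_le_sum fun i _ => ?_
    simp only [Pi.smul_apply, Matrix.col_apply, MulOpposite.op_one, one_smul]
    exact Finset.single_le_sum (f := fun j => |U i j| ^ p)
      (fun j _ => Real.rpow_nonneg (abs_nonneg _) _) (Finset.mem_univ j₀)
  have hqe : 1 ≤ qnorm p (Pi.single j₀ (1:ℝ)) := by
    rw [qnorm]
    split_ifs with hcase
    · have h2 := le_ciSup (f := fun j => |Pi.single j₀ (1:ℝ) j|)
        (Set.Finite.bddAbove (Set.finite_range _)) j₀
      simpa using h2
    · have h1 : 1 < p := lt_of_le_of_ne hp (Ne.symm hcase)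
      rw [pnorm]
      have hpp : 0 < p/(p-1) := by
        apply div_pos hp0; linarith
      have hsum : (1:ℝ) ≤ ∑ j, |Pi.single j₀ (1:ℝ) j| ^ (p/(p-1)) := by
        have h3 : |(Pi.single j₀ (1:ℝ) : Fin d → ℝ) j₀| ^ (p/(p-1)) ≤ ∑ j, |(Pi.single j₀ (1:ℝ) : Fin d → ℝ) j| ^ (p/(p-1)) := Finset.single_le_sum
          (fun j _ => Real.rpow_nonneg (abs_nonneg _) _) (Finset.mem_univ j₀)
        simpa using h3
      calc (1:ℝ) = 1 ^ (1/(p/(p-1))) := (Real.one_rpow _).symm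
        _ ≤ (∑ j, |Pi.single j₀ (1:ℝ) j| ^ (p/(p-1))) ^ (1/(p/(p-1))) :=
            Real.rpow_le_rpow zero_le_one hsum (by positivity)
  have hβe := hUβ (Pi.single j₀ (1:ℝ))
  have hβ_pos : 0 < β := by
    by_contra h
    push_neg at h
    nlinarith [pnorm_nonneg p (U.mulVec (Pi.single j₀ (1:ℝ))), hqe, hβe,
      mul_nonneg (neg_nonneg.mpr h) (pnorm_nonneg p (U.mulVec (Pi.single j₀ (1:ℝ))))]
  have hαβ : (1:ℝ) ≤ α * β := by
    have h2 : β * pnorm p (U.mulVec (Pi.single j₀ (1:ℝ))) ≤ β * α :=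
      mul_le_mul_of_nonneg_left (le_trans hcol_le hUα) hβ_pos.le
    nlinarith [hqe, hβe]
  have hαβ_pos : (0:ℝ) < α * β := by linarith
  -- constants
  set Q : ℝ := 24 ^ p * (α*β) ^ p with hQ_def
  clear_value Q
  have hQ_pos : 0 < Q := by
    have h1 : (0:ℝ) < 24 ^ p := Real.rpow_pos_of_pos (by norm_num) _
    have h2 : (0:ℝ) < (α*β) ^ p := Real.rpow_pos_of_pos hαβ_pos _
    rw [hQ_def]; exact mul_pos h1 h2
  set M : ℝ := Q * Z ^ p / r₂ with hM_def
  clear_value M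
  have hM_pos : 0 < M := by
    rw [hM_def]; exact div_pos (mul_pos hQ_pos hZp_pos) hr₂
  have hD : (0:ℝ) < 1+6*ε := by linarith
  set s : ℝ := 3*ε/(1+6*ε) with hs_def
  clear_value s
  have hs_pos : 0 < s := by rw [hs_def]; positivity
  set lam : ℝ := s / M with hlam_def
  clear_value lam
  have hlam_pos : 0 < lam := by rw [hlam_def]; exact div_pos hs_pos hM_pos
  have hlamM : lam * M = s := by
    rw [hlam_def, div_mul_cancel₀ _ hM_pos.ne']
  have hexps1 : Real.exp (-s) ≤ 1 := by
    rw [Real.exp_le_one_iff]; linarith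
  set g : ℝ := (1 - Real.exp (-s)) / M with hg_def
  clear_value g
  have hg_nonneg : 0 ≤ g := by
    rw [hg_def]; exact div_nonneg (by linarith) hM_pos.le
  have hg_le_lam : g ≤ lam := by
    rw [hg_def, hlam_def]
    gcongr
    linarith [Real.add_one_le_exp (-s)]
  -- the coordinate weights
  set c : Fin n → ℝ := fun i => |ρ i| ^ p with hc_def
  have hc_nonneg : ∀ i, 0 ≤ c i := fun i => Real.rpow_nonneg (abs_nonneg _) _
  -- the key per-coordinate bound
  have hkey : ∀ i, qpr i < 1 → c i ≤ qpr i * M := by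
    intro i hlt
    obtain ⟨hqi_pos, hqi_le⟩ := hq i
    set K : ℝ := (qpr i / r₂) ^ (1/p) with hK_def
    have hK_pos : 0 < K := Real.rpow_pos_of_pos (div_pos hqi_pos hr₂) _
    have hKp : K ^ p = qpr i / r₂ := by
      rw [hK_def, ← Real.rpow_mul (div_nonneg hqi_pos.le hr₂.le), one_div,
        inv_mul_cancel₀ (ne_of_gt hp0), Real.rpow_one]
    have hρh_i : |ρh i| ≤ K * (8*Z) := by
      apply le_of_rpow_le_rpow hp (abs_nonneg _) (by positivity)
      have h0 := hq1 i hlt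
      rw [div_le_iff₀ (Real.rpow_pos_of_pos hρh_pos p)] at h0
      have h1 : |ρh i| ^ p ≤ (qpr i / r₂) * pnorm p ρh ^ p := by
        rw [div_mul_eq_mul_div, le_div_iff₀ hr₂]
        calc |ρh i| ^ p * r₂ = r₂ * |ρh i| ^ p := by ring
          _ ≤ qpr i * pnorm p ρh ^ p := h0
      have h2 : pnorm p ρh ^ p ≤ (8*Z) ^ p :=
        Real.rpow_le_rpow (pnorm_nonneg _ _) hxc hp0.le
      have h3 : (K * (8*Z)) ^ p = (qpr i / r₂) * (8*Z) ^ p := by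
        rw [Real.mul_rpow hK_pos.le (by positivity), hKp]
      rw [h3]
      calc |ρh i| ^ p ≤ (qpr i / r₂) * pnorm p ρh ^ p := h1
        _ ≤ (qpr i / r₂) * (8*Z)^p :=
            mul_le_mul_of_nonneg_left h2 (div_nonneg hqi_pos.le hr₂.le)
    have hrow : pnorm p (U i) ≤ K * α := by
      apply le_of_rpow_le_rpow hp (pnorm_nonneg _ _) (by positivity)
      have h0 := hq2 i hlt
      rw [div_le_iff₀ (Real.rpow_pos_of_pos hmp_pos p)] at h0
      have h1 : pnorm p (U i) ^ p ≤ (qpr i / r₂) * mpnorm p U ^ p := by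
        rw [div_mul_eq_mul_div, le_div_iff₀ hr₂]
        calc pnorm p (U i) ^ p * r₂ = r₂ * pnorm p (U i) ^ p := by ring
          _ ≤ qpr i * mpnorm p U ^ p := h0
      have h2 : mpnorm p U ^ p ≤ α ^ p :=
        Real.rpow_le_rpow hmp_pos.le hUα hp0.le
      have h3 : (K * α) ^ p = (qpr i / r₂) * α ^ p := by
        rw [Real.mul_rpow hK_pos.le hα_pos.le, hKp]
      rw [h3]
      exact le_trans h1 (mul_le_mul_of_nonneg_left h2 (div_nonneg hqi_pos.le hr₂.le))
    have hu_eq : A.mulVec xε - A.mulVec xc = U.mulVec (τ.mulVec (xε - xc)) := by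
      rw [Matrix.mulVec_mulVec, ← hA, Matrix.mulVec_sub]
    have hqz : qnorm p (τ.mulVec (xε - xc)) ≤ β * (12*Z) := by
      refine le_trans (hUβ _) ?_
      apply mul_le_mul_of_nonneg_left _ hβ_pos.le
      rw [← hu_eq]; exact hball
    have hui : |(A.mulVec xε - A.mulVec xc) i| ≤ (K*α) * (β*(12*Z)) := by
      rw [hu_eq]
      have h2 := holder_row hp (fun j => U i j) (τ.mulVec (xε - xc))
      have h3 : (U.mulVec (τ.mulVec (xε - xc))) i = ∑ j, U i j * (τ.mulVec (xε - xc)) j := by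
        simp [Matrix.mulVec, dotProduct]
      rw [h3]
      calc |∑ j, U i j * (τ.mulVec (xε - xc)) j|
          ≤ pnorm p (fun j => U i j) * qnorm p (τ.mulVec (xε - xc)) := h2
        _ ≤ (K*α) * (β*(12*Z)) := by
            apply mul_le_mul hrow hqz (qnorm_nonneg _ _) (by positivity)
    have hρi : |ρ i| ≤ K * (24 * (α*β) * Z) := by
      have he : ρ i = (A.mulVec xε - A.mulVec xc) i + ρh i := by
        rw [hρ_def, hρh_def]
        simp only [Pi.sub_apply]
        ring
      calc |ρ i| ≤ |(A.mulVec xε - A.mulVec xc) i| + |ρh i| := by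
            rw [he]; exact abs_add_le _ _
        _ ≤ (K*α) * (β*(12*Z)) + K*(8*Z) := add_le_add hui hρh_i
        _ ≤ K * (24 * (α*β) * Z) := by
            have hKZ : (0:ℝ) ≤ K * Z := (mul_pos hK_pos hZpos).le
            nlinarith [mul_le_mul_of_nonneg_left hαβ hKZ, mul_nonneg hKZ hαβ_pos.le]
    have hcb : c i ≤ (K * (24*(α*β)*Z)) ^ p := by
      rw [hc_def]
      exact Real.rpow_le_rpow (abs_nonneg _) hρi hp0.le
    have heq2 : (K * (24*(α*β)*Z)) ^ p = (qpr i / r₂) * (Q * Z^p) := by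
      rw [Real.mul_rpow hK_pos.le (by positivity), hKp,
        Real.mul_rpow (by positivity : (0:ℝ) ≤ 24*(α*β)) hZpos.le,
        Real.mul_rpow (by norm_num : (0:ℝ) ≤ 24) hαβ_pos.le, hQ_def]
    calc c i ≤ (qpr i / r₂) * (Q * Z ^ p) := heq2 ▸ hcb
      _ = qpr i * M := by rw [hM_def]; ring
  -- the random variables
  set Yf : Fin n → Ω → ℝ := fun i ω => |T ω i i| ^ p * c i with hY_def
  have hYmeas : ∀ i, Measurable (Yf i) := by
    intro i
    have h1 : Measurable fun x : ℝ => |x| ^ p * c i :=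
      (((Real.continuous_rpow_const (by linarith : (0:ℝ) ≤ p)).comp
        continuous_abs).measurable).mul_const _
    exact h1.comp (hT.meas i)
  have hYindep : ProbabilityTheory.iIndepFun Yf μ :=
    hT.indep.comp (fun i (x:ℝ) => |x| ^ p * c i)
      (fun i => (((Real.continuous_rpow_const (by linarith : (0:ℝ) ≤ p)).comp
        continuous_abs).measurable).mul_const _)
  have hYnn : ∀ i ω, 0 ≤ Yf i ω := fun i ω =>
    mul_nonneg (Real.rpow_nonneg (abs_nonneg _) _) (hc_nonneg i)
  set S : Ω → ℝ := ∑ i, Yf i with hS_def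
  have hS_apply : ∀ ω, S ω = ∑ i, Yf i ω := fun ω => by
    rw [hS_def]; simp [Finset.sum_apply]
  have hSnn : ∀ ω, 0 ≤ S ω := fun ω => by
    rw [hS_apply]; exact Finset.sum_nonneg fun i _ => hYnn i ω
  have hSmeas : Measurable S := by
    have h1 : S = fun ω => ∑ i, Yf i ω := funext hS_apply
    rw [h1]
    exact Finset.measurable_sum _ (fun i _ => hYmeas i)
  set a : ℝ := ((1+3*ε)*Z) ^ p with ha_def
  clear_value a
  -- event inclusion
  have hsub : {ω | pnorm p ((T ω).mulVec ρ) ≤ (1+3*ε)*Z} ⊆ {ω | S ω ≤ a} := by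
    intro ω hω
    simp only [Set.mem_setOf_eq] at hω ⊢
    have h1 : pnorm p ((T ω).mulVec ρ) ^ p ≤ a := by
      rw [ha_def]
      exact Real.rpow_le_rpow (pnorm_nonneg _ _) hω hp0.le
    rw [pnorm_rpow hp] at h1
    have h2 : ∀ i, |((T ω).mulVec ρ) i| ^ p = Yf i ω := by
      intro i
      have h3 : ((T ω).mulVec ρ) i = T ω i i * ρ i := by
        rw [Matrix.mulVec, dotProduct]
        exact Finset.sum_eq_single i
          (fun j _ hj => by rw [hT.offdiag ω i j (Ne.symm hj), zero_mul])
          (fun h => absurd (Finset.mem_univ i) h)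
      rw [h3, abs_mul, Real.mul_rpow (abs_nonneg _) (abs_nonneg _)]
    rw [hS_apply]
    calc ∑ i, Yf i ω = ∑ i, |((T ω).mulVec ρ) i| ^ p :=
          (Finset.sum_congr rfl fun i _ => (h2 i).symm)
      _ ≤ a := h1
  -- integrability
  have hint : MeasureTheory.Integrable (fun ω => Real.exp (-lam * S ω)) μ := by
    refine MeasureTheory.Integrable.mono' (MeasureTheory.integrable_const (1:ℝ))
      ((hSmeas.const_mul (-lam)).exp.aestronglyMeasurable)
      (Filter.Eventually.of_forall fun ω => ?_)
    rw [Real.norm_eq_abs, abs_of_pos (Real.exp_pos _), Real.exp_le_one_iff]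
    have := hSnn ω
    nlinarith [hlam_pos]
  -- Chernoff/Markov bound
  have hmarkov := ProbabilityTheory.measure_le_le_exp_mul_mgf (μ := μ) (X := S) a
    (t := -lam) (by linarith) hint
  -- mgf of the sum
  have hmgf_sum : ProbabilityTheory.mgf S μ (-lam) =
      ∏ i, ProbabilityTheory.mgf (Yf i) μ (-lam) := by
    rw [hS_def]
    exact hYindep.mgf_sum hYmeas Finset.univ
  -- mgf of each term
  have hmgf_i : ∀ i, ProbabilityTheory.mgf (Yf i) μ (-lam) =
      qpr i * Real.exp (-lam * (c i / qpr i)) + (1 - qpr i) := by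
    intro i
    obtain ⟨hqi_pos, hqi_le⟩ := hq i
    have hv_pos : (0:ℝ) < qpr i ^ (-(1/p)) := Real.rpow_pos_of_pos hqi_pos _
    have hitp := integral_two_point μ (fun ω => T ω i i) (hT.meas i)
      (qpr i ^ (-(1/p))) (qpr i) (ne_of_gt hv_pos) hqi_pos.le hqi_le
      (hT.prob_val i) (hT.prob_zero i)
      (fun x => Real.exp ((-lam) * (|x| ^ p * c i)))
    have hvp : |qpr i ^ (-(1/p))| ^ p = (qpr i)⁻¹ := by
      rw [abs_of_pos hv_pos, ← Real.rpow_mul hqi_pos.le,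
        show (-(1/p))*p = -1 by field_simp, Real.rpow_neg_one]
    have h0 : |(0:ℝ)| ^ p = 0 := by
      rw [abs_zero, Real.zero_rpow (ne_of_gt hp0)]
    calc ProbabilityTheory.mgf (Yf i) μ (-lam)
        = ∫ ω, Real.exp ((-lam) * (|T ω i i| ^ p * c i)) ∂μ := by
          simp only [ProbabilityTheory.mgf, hY_def]
      _ = qpr i * Real.exp ((-lam) * (|qpr i ^ (-(1/p))| ^ p * c i)) +
            (1 - qpr i) * Real.exp ((-lam) * (|(0:ℝ)| ^ p * c i)) := hitp
      _ = qpr i * Real.exp (-lam * (c i / qpr i)) + (1 - qpr i) := by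
          rw [hvp, h0]
          simp only [zero_mul, mul_zero, Real.exp_zero, mul_one]
          congr 2
          rw [inv_mul_eq_div]
  -- per-factor bound
  have hfac : ∀ i, qpr i * Real.exp (-lam * (c i / qpr i)) + (1 - qpr i) ≤
      Real.exp (-(g * c i)) := by
    intro i
    obtain ⟨hqi_pos, hqi_le⟩ := hq i
    rcases lt_or_eq_of_le hqi_le with hlt | heq1
    · have hwM : c i / qpr i ≤ M := by
        rw [div_le_iff₀ hqi_pos]
        calc c i ≤ qpr i * M := hkey i hlt
          _ = M * qpr i := by ring
      have hw0 : 0 ≤ c i / qpr i := div_nonneg (hc_nonneg i) hqi_pos.le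
      have hch := exp_chord hM_pos hw0 hwM hlam_pos.le
      rw [hlamM] at hch
      have h2 : qpr i * Real.exp (-lam * (c i / qpr i)) + (1 - qpr i) ≤ 1 - g * c i := by
        have h3 : -lam * (c i / qpr i) = -(lam * (c i / qpr i)) := by ring
        rw [h3]
        have h4 := mul_le_mul_of_nonneg_left hch hqi_pos.le
        have h5 : qpr i * (c i / qpr i / M * (1 - Real.exp (-s))) = g * c i := by
          rw [hg_def]
          field_simp
        nlinarith [h4, h5]
      refine le_trans h2 ?_
      linarith [Real.add_one_le_exp (-(g * c i))]
    · rw [heq1]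
      simp only [one_mul, div_one, sub_self, add_zero]
      rw [Real.exp_le_exp]
      nlinarith [hg_le_lam, hc_nonneg i, hlam_pos]
  -- product bound
  have hprod : ∏ i, ProbabilityTheory.mgf (Yf i) μ (-lam) ≤
      Real.exp (-(g * pnorm p ρ ^ p)) := by
    have h1 : ∏ i, ProbabilityTheory.mgf (Yf i) μ (-lam) ≤
        ∏ i, Real.exp (-(g * c i)) := by
      refine Finset.prod_le_prod (fun i _ => ?_) (fun i _ => ?_)
      · rw [hmgf_i i]
        have := Real.exp_pos (-lam * (c i / qpr i))
        nlinarith [(hq i).1, (hq i).2]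
      · rw [hmgf_i i]
        exact hfac i
    refine le_trans h1 (le_of_eq ?_)
    rw [← Real.exp_sum]
    congr 1
    rw [pnorm_rpow hp, Finset.mul_sum, ← Finset.sum_neg_distrib]
  -- final exponent computation
  have hP : ((1+6*ε)*Z) ^ p ≤ pnorm p ρ ^ p :=
    Real.rpow_le_rpow (by positivity) hfar.le hp0.le
  have hexp_arg : lam * a - g * pnorm p ρ ^ p ≤ -(ε^2*r₂) / Q := by
    have hcore := core_ineq hp hε hε'
    have ha_eq : a = (1+3*ε)^p * Z^p := by
      rw [ha_def, Real.mul_rpow (by linarith) hZpos.le]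
    have hB_eq : ((1+6*ε)*Z)^p = (1+6*ε)^p * Z^p := Real.mul_rpow (by linarith) hZpos.le
    have h1 : s * a + ε^2 * Z^p ≤ (1 - Real.exp (-s)) * (((1+6*ε)*Z)^p) := by
      rw [ha_eq, hB_eq, hs_def]
      calc 3*ε/(1+6*ε) * ((1+3*ε)^p * Z^p) + ε^2*Z^p
          = (3*ε/(1+6*ε) * (1+3*ε)^p + ε^2) * Z^p := by ring
        _ ≤ ((1 - Real.exp (-(3*ε/(1+6*ε)))) * (1+6*ε)^p) * Z^p :=
            mul_le_mul_of_nonneg_right hcore hZp_pos.le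
        _ = (1 - Real.exp (-(3*ε/(1+6*ε)))) * ((1+6*ε)^p * Z^p) := by ring
    have h2 : (1 - Real.exp (-s)) * (((1+6*ε)*Z)^p) ≤
        (1 - Real.exp (-s)) * pnorm p ρ ^ p :=
      mul_le_mul_of_nonneg_left hP (by linarith)
    have h3 : s * a - (1 - Real.exp (-s)) * pnorm p ρ ^ p ≤ -(ε^2 * Z^p) := by linarith
    have h4 : lam * a - g * pnorm p ρ ^ p =
        (s * a - (1 - Real.exp (-s)) * pnorm p ρ ^ p) / M := by
      rw [hlam_def, hg_def]
      ring
    rw [h4]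
    have h5 : (s * a - (1 - Real.exp (-s)) * pnorm p ρ ^ p) / M ≤ (-(ε^2 * Z^p)) / M :=
      (div_le_div_iff_of_pos_right hM_pos).mpr h3
    refine le_trans h5 (le_of_eq ?_)
    rw [div_eq_div_iff hM_pos.ne' hQ_pos.ne', hM_def]
    field_simp
  -- conclusion
  calc μ {ω | pnorm p ((T ω).mulVec ρ) ≤ (1+3*ε)*Z}
      ≤ μ {ω | S ω ≤ a} := MeasureTheory.measure_mono hsub
    _ ≤ ENNReal.ofReal (Real.exp (-(ε^2*r₂) / Q)) := by
        rw [ENNReal.le_ofReal_iff_toReal_le (MeasureTheory.measure_ne_top μ _) (Real.exp_pos _).le]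
        refine le_trans hmarkov ?_
        calc Real.exp (-(-lam) * a) * ProbabilityTheory.mgf S μ (-lam)
            = Real.exp (lam * a) * ∏ i, ProbabilityTheory.mgf (Yf i) μ (-lam) := by
              rw [hmgf_sum, neg_neg]
          _ ≤ Real.exp (lam * a) * Real.exp (-(g * pnorm p ρ ^ p)) :=
              mul_le_mul_of_nonneg_left hprod (Real.exp_pos _).le
          _ = Real.exp (lam * a - g * pnorm p ρ ^ p) := by
              rw [← Real.exp_add]; ring_nf
          _ ≤ Real.exp (-(ε^2*r₂) / Q) := Real.exp_le_exp.mpr hexp_arg
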